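/- Let a < b be extended reals and let G : (a,b) → ℝ be continuous and co-positive definite on (a,b), with μ the nonnegative Borel measure on ℝ satisfying G(y) = ∫ℝ e^{−yt} dμ(t) for y ∈ (a,b). Then the function g(z) = ∫ℝ e^{−zt} dμ(t) is well defined and holomorphic on the vertical strip T_{a,b}, satisfies g(y) = G(y) for real y ∈ (a,b), is co-positive definite on T_{a,b}, and for every n ≥ 1 and z ∈ T_{a,b} its n-th derivative satisfies g⁽ⁿ⁾(z) = ∫ℝ (−t)ⁿ e^{−zt} dμ(t). -/

import Mathlib

open Complex MeasureTheory Filter Set Topology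
open scoped Real BigOperators ComplexOrder

noncomputable section

/-- `f : ℝ → ℂ` is positive definite. -/
def IsPosDefFun (f : ℝ → ℂ) : Prop :=
  ∀ (n : ℕ) (x : Fin n → ℝ) (ξ : Fin n → ℂ),
    0 ≤ ∑ k, ∑ l, f (x k - x l) * ξ k * (starRingEnd ℂ) (ξ l)

/-- `f` is positive definite on `S ⊆ ℂ`. -/
def IsPosDefOnC (f : ℂ → ℂ) (S : Set ℂ) : Prop :=
  ∀ (n : ℕ) (z : Fin n → ℂ), (∀ k l, z k - (starRingEnd ℂ) (z l) ∈ S) →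
    ∀ ξ : Fin n → ℂ,
      0 ≤ ∑ k, ∑ l, f (z k - (starRingEnd ℂ) (z l)) * ξ k * (starRingEnd ℂ) (ξ l)

/-- `f` is co-positive definite on `T ⊆ ℂ`. -/
def IsCoPosDefOnC (f : ℂ → ℂ) (T : Set ℂ) : Prop :=
  ∀ (n : ℕ) (z : Fin n → ℂ), (∀ k l, z k + (starRingEnd ℂ) (z l) ∈ T) →
    ∀ ξ : Fin n → ℂ,
      0 ≤ ∑ k, ∑ l, f (z k + (starRingEnd ℂ) (z l)) * ξ k * (starRingEnd ℂ) (ξ l)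

/-- `G : ℝ → ℂ` is co-positive definite on `I ⊆ ℝ`. -/
def IsCoPosDefOnR (G : ℝ → ℂ) (I : Set ℝ) : Prop :=
  ∀ (n : ℕ) (x : Fin n → ℝ), (∀ k l, x k + x l ∈ I) →
    ∀ ξ : Fin n → ℂ,
      0 ≤ ∑ k, ∑ l, G (x k + x l) * ξ k * (starRingEnd ℂ) (ξ l)

/-- Horizontal strip `S_{a,b}`. -/
def HStrip (a b : EReal) : Set ℂ := {z | a < (z.im : EReal) ∧ (z.im : EReal) < b}

/-- Vertical strip `T_{a,b}`. -/
def VStrip (a b : EReal) : Set ℂ := {z | a < (z.re : EReal) ∧ (z.re : EReal) < b}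

/-- `μ` is exponentially finite with respect to the interval `(a,b)`. -/
def ExpFinite (μ : Measure ℝ) (a b : EReal) : Prop :=
  ∀ y : ℝ, a < (y : EReal) → (y : EReal) < b →
    Integrable (fun t : ℝ => Real.exp (-y * t)) μ

/-- between an EReal and a coe real -/
lemma ereal_exists_btwn_left {a : EReal} {x : ℝ} (h : a < (x : EReal)) :
    ∃ y : ℝ, a < (y : EReal) ∧ y < x := by
  obtain ⟨c, h1, h2⟩ := exists_between h
  lift c to ℝ using ⟨h2.ne_top, ne_bot_of_gt h1⟩
  exact ⟨c, h1, by exact_mod_cast h2⟩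

lemma ereal_exists_btwn_right {b : EReal} {x : ℝ} (h : (x : EReal) < b) :
    ∃ y : ℝ, x < y ∧ (y : EReal) < b := by
  obtain ⟨c, h1, h2⟩ := exists_between h
  lift c to ℝ using ⟨h2.ne_top, ne_bot_of_gt h1⟩
  exact ⟨c, by exact_mod_cast h1, h2⟩

lemma abs_pow_le (n : ℕ) {ε : ℝ} (hε : 0 < ε) (t : ℝ) :
    |t| ^ n ≤ (n.factorial / ε ^ n) * Real.exp (ε * |t|) := by
  have h := Real.pow_div_factorial_le_exp (x := ε * |t|) (by positivity) n
  have hεn : (0:ℝ) < ε ^ n := by positivity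
  rw [div_le_iff₀ (by positivity), mul_pow] at h
  calc |t| ^ n = (ε ^ n * |t| ^ n) / ε ^ n := by field_simp
    _ ≤ (Real.exp (ε * |t|) * n.factorial) / ε ^ n := by
        have hf : (0:ℝ) < n.factorial := by exact_mod_cast n.factorial_pos
        gcongr
    _ = (n.factorial / ε ^ n) * Real.exp (ε * |t|) := by ring

/-- exp(-y't) ≤ exp(-y₀t)+exp(-y₃t) when y' ∈ [y₀,y₃] -/
lemma exp_le_sum {y₀ y₃ y' t : ℝ} (h0 : y₀ ≤ y') (h3 : y' ≤ y₃) :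
    Real.exp (-y' * t) ≤ Real.exp (-y₀ * t) + Real.exp (-y₃ * t) := by
  rcases le_or_gt 0 t with ht | ht
  · have : Real.exp (-y' * t) ≤ Real.exp (-y₀ * t) :=
      Real.exp_le_exp.2 (by nlinarith)
    linarith [Real.exp_pos (-y₃ * t)]
  · have : Real.exp (-y' * t) ≤ Real.exp (-y₃ * t) :=
      Real.exp_le_exp.2 (by nlinarith)
    linarith [Real.exp_pos (-y₀ * t)]

lemma integrable_pow_exp {μ : Measure ℝ} {y₀ y₃ : ℝ}
    (h0 : Integrable (fun t : ℝ => Real.exp (-y₀ * t)) μ)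
    (h3 : Integrable (fun t : ℝ => Real.exp (-y₃ * t)) μ)
    (n : ℕ) {y : ℝ} (hy0 : y₀ < y) (hy3 : y < y₃) :
    Integrable (fun t : ℝ => |t| ^ n * Real.exp (-y * t)) μ := by
  set ε : ℝ := min (y - y₀) (y₃ - y) with hε
  have hεpos : 0 < ε := lt_min (by linarith) (by linarith)
  set C : ℝ := n.factorial / ε ^ n with hC
  have key : ∀ t : ℝ, |t| ^ n * Real.exp (-y * t) ≤
      C * (Real.exp (-y₀ * t) + Real.exp (-y₃ * t)) +
      C * (Real.exp (-y₀ * t) + Real.exp (-y₃ * t)) := by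
    intro t
    have h1 : |t| ^ n ≤ C * Real.exp (ε * |t|) := abs_pow_le n hεpos t
    have hexp : Real.exp (ε * |t|) ≤ Real.exp (ε * t) + Real.exp (-(ε * t)) := by
      rcases le_or_gt 0 t with ht | ht
      · rw [_root_.abs_of_nonneg ht]; linarith [Real.exp_pos (-(ε * t))]
      · rw [_root_.abs_of_neg ht]; rw [show ε * -t = -(ε*t) by ring]
        linarith [Real.exp_pos (ε * t)]
    have h2 : |t| ^ n * Real.exp (-y * t) ≤
        C * (Real.exp ((ε - y) * t) + Real.exp ((-ε - y) * t)) := by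
      have hCpos : 0 ≤ C := by positivity
      calc |t| ^ n * Real.exp (-y * t) ≤ (C * Real.exp (ε * |t|)) * Real.exp (-y * t) := by
            apply mul_le_mul_of_nonneg_right h1 (Real.exp_pos _).le
        _ ≤ (C * (Real.exp (ε * t) + Real.exp (-(ε * t)))) * Real.exp (-y * t) := by
            apply mul_le_mul_of_nonneg_right ?_ (Real.exp_pos _).le
            exact mul_le_mul_of_nonneg_left hexp hCpos
        _ = C * (Real.exp (ε * t) * Real.exp (-y * t)
              + Real.exp (-(ε * t)) * Real.exp (-y * t)) := by ring
        _ = C * (Real.exp ((ε - y) * t) + Real.exp ((-ε - y) * t)) := by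
            rw [← Real.exp_add, ← Real.exp_add]; ring_nf
    have hm1 : ε ≤ y - y₀ := min_le_left _ _
    have hm2 : ε ≤ y₃ - y := min_le_right _ _
    have e1 : Real.exp ((ε - y) * t) ≤ Real.exp (-y₀ * t) + Real.exp (-y₃ * t) := by
      have := exp_le_sum (y₀ := y₀) (y₃ := y₃) (y' := y - ε) (t := t)
        (by linarith) (by linarith)
      rw [show -(y - ε) * t = (ε - y) * t by ring] at this; exact this
    have e2 : Real.exp ((-ε - y) * t) ≤ Real.exp (-y₀ * t) + Real.exp (-y₃ * t) := by
      have := exp_le_sum (y₀ := y₀) (y₃ := y₃) (y' := y + ε) (t := t)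
        (by linarith) (by linarith)
      rw [show -(y + ε) * t = (-ε - y) * t by ring] at this; exact this
    have hCpos : 0 ≤ C := by positivity
    nlinarith [h2, e1, e2]
  refine Integrable.mono' (((h0.add h3).const_mul C).add ((h0.add h3).const_mul C)) ?_ ?_
  · exact ((_root_.continuous_abs.pow n).mul
      (by fun_prop : Continuous fun t : ℝ => Real.exp (-y * t))).aestronglyMeasurable
  · filter_upwards with t
    rw [Real.norm_eq_abs, _root_.abs_of_nonneg (by positivity)]
    exact key t

lemma norm_cpow_exp (z : ℂ) (t : ℝ) (n : ℕ) :
    ‖(-t : ℂ) ^ n * Complex.exp (-z * t)‖ = |t| ^ n * Real.exp (-z.re * t) := by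
  rw [norm_mul, norm_pow, Complex.norm_exp]
  simp [Complex.norm_def, Complex.normSq_apply, Real.sqrt_mul_self_eq_abs]

lemma integrable_cpow_exp {μ : Measure ℝ} {y₀ y₃ : ℝ}
    (h0 : Integrable (fun t : ℝ => Real.exp (-y₀ * t)) μ)
    (h3 : Integrable (fun t : ℝ => Real.exp (-y₃ * t)) μ)
    (n : ℕ) {z : ℂ} (hy0 : y₀ < z.re) (hy3 : z.re < y₃) :
    Integrable (fun t : ℝ => (-t : ℂ) ^ n * Complex.exp (-z * t)) μ := by
  refine (integrable_pow_exp h0 h3 n hy0 hy3).mono' ?_ ?_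
  · exact (Continuous.mul (by fun_prop) (by fun_prop)).aestronglyMeasurable
  · filter_upwards with t
    exact le_of_eq (norm_cpow_exp z t n)

lemma hasDerivAt_cexp_param (t : ℝ) (w : ℂ) (n : ℕ) :
    HasDerivAt (fun z : ℂ => (-t : ℂ) ^ n * Complex.exp (-z * t))
      ((-t : ℂ) ^ (n + 1) * Complex.exp (-w * t)) w := by
  have h : HasDerivAt (fun z : ℂ => -z * (t : ℂ)) (-t : ℂ) w := by
    simpa using ((hasDerivAt_id w).neg.mul_const (t : ℂ))
  have := (h.cexp).const_mul ((-t : ℂ) ^ n)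
  refine this.congr_deriv ?_
  ring

lemma hasDerivAt_integral_nexp {μ : Measure ℝ} {a b : EReal}
    (hexp : ∀ y : ℝ, a < (y : EReal) → (y : EReal) < b →
      Integrable (fun t : ℝ => Real.exp (-y * t)) μ)
    (n : ℕ) {z : ℂ} (hz : z ∈ VStrip a b) :
    HasDerivAt (fun w : ℂ => ∫ t : ℝ, (-t : ℂ) ^ n * Complex.exp (-w * t) ∂μ)
      (∫ t : ℝ, (-t : ℂ) ^ (n + 1) * Complex.exp (-z * t) ∂μ) z := by
  obtain ⟨ha, hb⟩ := hz
  obtain ⟨y₁, hay₁, hy₁z⟩ := ereal_exists_btwn_left ha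
  obtain ⟨y₂, hzy₂, hy₂b⟩ := ereal_exists_btwn_right hb
  obtain ⟨y₀, hay₀, hy₀y₁⟩ := ereal_exists_btwn_left hay₁
  obtain ⟨y₃, hy₂y₃, hy₃b⟩ := ereal_exists_btwn_right hy₂b
  have h0 := hexp y₀ hay₀ ((EReal.coe_lt_coe_iff.2 hy₀y₁).trans ((EReal.coe_lt_coe_iff.2 hy₁z).trans ((EReal.coe_lt_coe_iff.2 hzy₂).trans hy₂b)))
  have h3 := hexp y₃ (hay₀.trans ((EReal.coe_lt_coe_iff.2 (hy₀y₁.trans (hy₁z.trans (hzy₂.trans hy₂y₃)))))) hy₃b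
  set ε : ℝ := min (z.re - y₁) (y₂ - z.re) with hεdef
  have hεpos : 0 < ε := lt_min (by linarith) (by linarith)
  have hball : ∀ w ∈ Metric.ball z ε, y₁ ≤ w.re ∧ w.re ≤ y₂ := by
    intro w hw
    have : |w.re - z.re| < ε := by
      calc |w.re - z.re| = |(w - z).re| := by simp [Complex.sub_re]
        _ ≤ ‖w - z‖ := Complex.abs_re_le_norm _
        _ < ε := by simpa [Metric.mem_ball, dist_eq_norm] using hw
    have habs := abs_lt.1 this
    constructor
    · have h := min_le_left (z.re - y₁) (y₂ - z.re); linarith [habs.1]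
    · have h := min_le_right (z.re - y₁) (y₂ - z.re); linarith [habs.2]
  have bint : Integrable (fun t : ℝ => |t| ^ (n + 1) * Real.exp (-y₁ * t)
      + |t| ^ (n + 1) * Real.exp (-y₂ * t)) μ :=
    (integrable_pow_exp h0 h3 (n + 1) hy₀y₁ (hy₁z.trans (hzy₂.trans hy₂y₃))).add
      (integrable_pow_exp h0 h3 (n + 1) (hy₀y₁.trans (hy₁z.trans hzy₂)) hy₂y₃)
  have key := hasDerivAt_integral_of_dominated_loc_of_deriv_le (μ := μ)
    (F := fun (w : ℂ) (t : ℝ) => (-t : ℂ) ^ n * Complex.exp (-w * t))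
    (F' := fun (w : ℂ) (t : ℝ) => (-t : ℂ) ^ (n + 1) * Complex.exp (-w * t))
    (bound := fun t : ℝ => |t| ^ (n + 1) * Real.exp (-y₁ * t)
      + |t| ^ (n + 1) * Real.exp (-y₂ * t))
    (Metric.ball_mem_nhds z hεpos)
    (Filter.Eventually.of_forall fun w =>
      (Continuous.mul (by fun_prop) (by fun_prop)).aestronglyMeasurable)
    (integrable_cpow_exp h0 h3 n (hy₀y₁.trans hy₁z) (hzy₂.trans hy₂y₃))
    ((Continuous.mul (by fun_prop) (by fun_prop)).aestronglyMeasurable)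
    ?_ bint
    (Filter.Eventually.of_forall fun t w _ => hasDerivAt_cexp_param t w n)
  · exact key.2
  · filter_upwards with t w hw
    rw [norm_cpow_exp]
    obtain ⟨hw1, hw2⟩ := hball w hw
    have hpow : (0:ℝ) ≤ |t| ^ (n + 1) := by positivity
    have := exp_le_sum (y₀ := y₁) (y₃ := y₂) (y' := w.re) (t := t) hw1 hw2
    nlinarith [Real.exp_pos (-y₁ * t), Real.exp_pos (-y₂ * t)]


/-- The Widder representation of a continuous co-positive definite `G` on `(a,b)` extends to a
holomorphic, co-positive definite function `g(z) = ∫ e^{-zt} dμ(t)` on the vertical strip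
`T_{a,b}`, whose derivatives are obtained by differentiating under the integral sign. -/
theorem stmt3 (a b : EReal) (hab : a < b) (G : ℝ → ℝ) (μ : Measure ℝ)
    (hcont : ContinuousOn G {y : ℝ | a < (y : EReal) ∧ (y : EReal) < b})
    (hcpd : IsCoPosDefOnR (fun x => (G x : ℂ)) {y : ℝ | a < (y : EReal) ∧ (y : EReal) < b})
    (hrep : ∀ y : ℝ, a < (y : EReal) → (y : EReal) < b →
      Integrable (fun t : ℝ => Real.exp (-y * t)) μ ∧
      G y = ∫ t : ℝ, Real.exp (-y * t) ∂μ) :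
    (∀ z ∈ VStrip a b, Integrable (fun t : ℝ => Complex.exp (-z * t)) μ) ∧
    DifferentiableOn ℂ (fun z => ∫ t : ℝ, Complex.exp (-z * t) ∂μ) (VStrip a b) ∧
    (∀ y : ℝ, a < (y : EReal) → (y : EReal) < b →
      (∫ t : ℝ, Complex.exp (-(y : ℂ) * t) ∂μ) = (G y : ℂ)) ∧
    IsCoPosDefOnC (fun z => ∫ t : ℝ, Complex.exp (-z * t) ∂μ) (VStrip a b) ∧
    (∀ n : ℕ, 1 ≤ n → ∀ z ∈ VStrip a b,
      iteratedDeriv n (fun z => ∫ t : ℝ, Complex.exp (-z * t) ∂μ) z =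
        ∫ t : ℝ, (-t : ℂ) ^ n * Complex.exp (-z * t) ∂μ) := by
  have hexp : ∀ y : ℝ, a < (y : EReal) → (y : EReal) < b →
      Integrable (fun t : ℝ => Real.exp (-y * t)) μ := fun y h1 h2 => (hrep y h1 h2).1
  -- integrability of (-t)^n exp(-zt) for z in the strip
  have partN : ∀ (n : ℕ), ∀ z ∈ VStrip a b,
      Integrable (fun t : ℝ => (-t : ℂ) ^ n * Complex.exp (-z * t)) μ := by
    intro n z hz
    obtain ⟨y₀, hay₀, hy₀z⟩ := ereal_exists_btwn_left hz.1
    obtain ⟨y₃, hzy₃, hy₃b⟩ := ereal_exists_btwn_right hz.2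
    exact integrable_cpow_exp
      (hexp y₀ hay₀ ((EReal.coe_lt_coe_iff.2 hy₀z).trans hz.2))
      (hexp y₃ (hz.1.trans (EReal.coe_lt_coe_iff.2 hzy₃)) hy₃b) n hy₀z hzy₃
  have part1 : ∀ z ∈ VStrip a b, Integrable (fun t : ℝ => Complex.exp (-z * t)) μ := by
    intro z hz
    have := partN 0 z hz
    simpa using this
  have hasD : ∀ (n : ℕ), ∀ z ∈ VStrip a b,
      HasDerivAt (fun w : ℂ => ∫ t : ℝ, (-t : ℂ) ^ n * Complex.exp (-w * t) ∂μ)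
        (∫ t : ℝ, (-t : ℂ) ^ (n + 1) * Complex.exp (-z * t) ∂μ) z :=
    fun n z hz => hasDerivAt_integral_nexp hexp n hz
  have hg0 : (fun z : ℂ => ∫ t : ℝ, Complex.exp (-z * t) ∂μ)
      = fun z : ℂ => ∫ t : ℝ, (-t : ℂ) ^ 0 * Complex.exp (-z * t) ∂μ := by
    funext z; simp
  have hopen : IsOpen (VStrip a b) := by
    have : VStrip a b = Complex.re ⁻¹' ((fun x : ℝ => (x : EReal)) ⁻¹' Ioo a b) := rfl
    rw [this]
    exact (isOpen_Ioo.preimage continuous_coe_real_ereal).preimage Complex.continuous_re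
  refine ⟨part1, ?_, ?_, ?_, ?_⟩
  · intro z hz
    rw [hg0]
    exact (hasD 0 z hz).differentiableAt.differentiableWithinAt
  · intro y h1 h2
    have : ∀ t : ℝ, Complex.exp (-(y : ℂ) * t) = ((Real.exp (-y * t) : ℝ) : ℂ) := by
      intro t; rw [Complex.ofReal_exp]; push_cast; ring_nf
    simp_rw [this]
    rw [(hrep y h1 h2).2]
    exact integral_ofReal
  · intro m z hmem ξ
    have hint : ∀ k l, Integrable
        (fun t : ℝ => Complex.exp (-(z k + (starRingEnd ℂ) (z l)) * t) * (ξ k * (starRingEnd ℂ) (ξ l))) μ :=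
      fun k l => (part1 _ (hmem k l)).mul_const _
    have hpt : ∀ t : ℝ,
        ∑ k, ∑ l, Complex.exp (-(z k + (starRingEnd ℂ) (z l)) * t) * (ξ k * (starRingEnd ℂ) (ξ l))
          = ((Complex.normSq (∑ k, Complex.exp (-(z k) * t) * ξ k) : ℝ) : ℂ) := by
      intro t
      rw [← Complex.mul_conj, map_sum, Finset.sum_mul_sum]
      refine Finset.sum_congr rfl fun k _ => Finset.sum_congr rfl fun l _ => ?_
      rw [map_mul]
      have harg : (-(z k + (starRingEnd ℂ) (z l)) * t : ℂ)
          = -z k * t + (starRingEnd ℂ) (-z l * t) := by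
        rw [map_mul, map_neg, Complex.conj_ofReal]; ring
      rw [harg, Complex.exp_add, ← Complex.exp_conj]
      ring
    have key : ∑ k, ∑ l, (∫ t : ℝ, Complex.exp (-(z k + (starRingEnd ℂ) (z l)) * t) ∂μ)
          * ξ k * (starRingEnd ℂ) (ξ l)
        = ((∫ t : ℝ, Complex.normSq (∑ k, Complex.exp (-(z k) * t) * ξ k) ∂μ : ℝ) : ℂ) := by
      calc ∑ k, ∑ l, (∫ t : ℝ, Complex.exp (-(z k + (starRingEnd ℂ) (z l)) * t) ∂μ)
            * ξ k * (starRingEnd ℂ) (ξ l)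
          = ∑ k, ∑ l, ∫ t : ℝ, Complex.exp (-(z k + (starRingEnd ℂ) (z l)) * t)
              * (ξ k * (starRingEnd ℂ) (ξ l)) ∂μ := by
            refine Finset.sum_congr rfl fun k _ => Finset.sum_congr rfl fun l _ => ?_
            rw [mul_assoc, ← integral_mul_const]
        _ = ∫ t : ℝ, ∑ k, ∑ l, Complex.exp (-(z k + (starRingEnd ℂ) (z l)) * t)
              * (ξ k * (starRingEnd ℂ) (ξ l)) ∂μ := by
            refine Eq.symm ?_
            rw [integral_finset_sum _ (fun k _ => integrable_finset_sum _ (fun l _ => hint k l))]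
            exact Finset.sum_congr rfl fun k _ => integral_finset_sum _ fun l _ => hint k l
        _ = ∫ t : ℝ, ((Complex.normSq (∑ k, Complex.exp (-(z k) * t) * ξ k) : ℝ) : ℂ) ∂μ := by
            simp_rw [hpt]
        _ = ((∫ t : ℝ, Complex.normSq (∑ k, Complex.exp (-(z k) * t) * ξ k) ∂μ : ℝ) : ℂ) :=
            integral_ofReal
    rw [key]
    exact Complex.zero_le_real.2 (integral_nonneg fun t => Complex.normSq_nonneg _)
  · have main : ∀ (n : ℕ), ∀ z ∈ VStrip a b,
        iteratedDeriv n (fun z => ∫ t : ℝ, Complex.exp (-z * t) ∂μ) z =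
          ∫ t : ℝ, (-t : ℂ) ^ n * Complex.exp (-z * t) ∂μ := by
      intro n
      induction n with
      | zero => intro z hz; simp [iteratedDeriv_zero]
      | succ n ih =>
        intro z hz
        rw [iteratedDeriv_succ]
        have heq : iteratedDeriv n (fun z => ∫ t : ℝ, Complex.exp (-z * t) ∂μ)
            =ᶠ[𝓝 z] fun w : ℂ => ∫ t : ℝ, (-t : ℂ) ^ n * Complex.exp (-w * t) ∂μ :=
          Filter.eventuallyEq_of_mem (hopen.mem_nhds hz) ih
        rw [heq.deriv_eq, (hasD n z hz).deriv]
    exact fun n _ z hz => main n z hz
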